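/- For every positive integer d, the multiple zeta value ζ(2,2,...,2) with d repetitions of 2 equals π^{2d}/(2d+1)!. -/

import Mathlib

/-- The multiple zeta value `ζ(s₁,…,s_l) = ∑_{1 ≤ k₁ < ⋯ < k_l} ∏ 1/kᵢ^{sᵢ}`. -/
noncomputable def MZV (s : List ℕ) : ℝ :=
  ∑' f : {f : Fin s.length → ℕ+ // StrictMono f},
    ∏ i : Fin s.length, (1 : ℝ) / ((f.1 i : ℕ) : ℝ) ^ s.get i

/-- The multiple t-value `t(s₁,…,s_l) = ∑_{1 ≤ k₁ < ⋯ < k_l} ∏ 1/(2kᵢ-1)^{sᵢ}`. -/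
noncomputable def MTV (s : List ℕ) : ℝ :=
  ∑' f : {f : Fin s.length → ℕ+ // StrictMono f},
    ∏ i : Fin s.length, (1 : ℝ) / ((2 * (f.1 i : ℕ) - 1 : ℕ) : ℝ) ^ s.get i

open Finset Filter Real Topology

namespace Stmt4

noncomputable def a : ℕ+ → ℝ := fun k => 1 / ((k : ℕ) : ℝ) ^ 2

lemma a_nonneg (k : ℕ+) : 0 ≤ a k := by unfold a; positivity

/-- ζ(2,…,2) with `d` twos, as a plain tsum. -/
noncomputable def E (d : ℕ) : ℝ :=
  ∑' f : {f : Fin d → ℕ+ // StrictMono f}, ∏ i, a (f.1 i)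

lemma hasSum_a : HasSum a (π ^ 2 / 6) := by
  have h := hasSum_zeta_two
  have hi : Function.Injective (fun k : ℕ+ => (k : ℕ)) := fun x y h => PNat.coe_injective h
  have h0 : ∀ x ∉ Set.range (fun k : ℕ+ => (k : ℕ)), (1 : ℝ) / (x : ℝ) ^ 2 = 0 := by
    intro x hx
    have : x = 0 := by
      by_contra hx0
      exact hx ⟨⟨x, Nat.pos_of_ne_zero hx0⟩, rfl⟩
    simp [this]
  exact (Function.Injective.hasSum_iff hi h0).mpr h

lemma pi_sq_div_six_le_two : π ^ 2 / 6 ≤ 2 := by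
  nlinarith [pi_lt_d2, pi_gt_three]

lemma hasSum_pi : ∀ d : ℕ,
    HasSum (fun g : Fin d → ℕ+ => ∏ i, a (g i)) ((π ^ 2 / 6) ^ d) := by
  intro d
  induction d with
  | zero =>
    rw [pow_zero]
    have hu : (fun g : Fin 0 → ℕ+ => ∏ i, a (g i)) = fun _ => (1 : ℝ) := by
      funext g; simp
    rw [hu]
    exact hasSum_single (f := fun _ : Fin 0 → ℕ+ => (1 : ℝ)) default
      (fun b hb => absurd (Subsingleton.elim b default) hb)
  | succ d ih =>
    have hs : Summable (fun p : ℕ+ × (Fin d → ℕ+) => a p.1 * ∏ i, a (p.2 i)) :=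
      Summable.mul_of_nonneg (f := a) (g := fun g : Fin d → ℕ+ => ∏ i, a (g i))
        hasSum_a.summable ih.summable a_nonneg
        (fun g => Finset.prod_nonneg fun i _ => a_nonneg _)
    have hval : HasSum (fun p : ℕ+ × (Fin d → ℕ+) => a p.1 * ∏ i, a (p.2 i))
        ((π ^ 2 / 6) ^ (d + 1)) := by
      have := Summable.tsum_mul_tsum hasSum_a.summable ih.summable hs
      rw [hasSum_a.tsum_eq, ih.tsum_eq] at this
      have h2 := hs.hasSum
      rw [← this] at h2
      convert h2 using 1
      ring
    have := (Equiv.hasSum_iff (Fin.consEquiv fun _ : Fin (d + 1) => ℕ+)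
      (f := fun g : Fin (d + 1) → ℕ+ => ∏ i, a (g i)) (a := (π ^ 2 / 6) ^ (d + 1))).mp ?_
    · exact this
    · have hfe : ((fun g : Fin (d + 1) → ℕ+ => ∏ i, a (g i)) ∘
          (Fin.consEquiv fun _ : Fin (d + 1) => ℕ+)) =
          fun p : ℕ+ × (Fin d → ℕ+) => a p.1 * ∏ i, a (p.2 i) := by
        funext p
        simp [Fin.consEquiv, Fin.prod_univ_succ]
      rw [hfe]
      exact hval

lemma summable_E (d : ℕ) :
    Summable (fun f : {f : Fin d → ℕ+ // StrictMono f} => ∏ i, a (f.1 i)) :=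
  (hasSum_pi d).summable.subtype _

lemma E_nonneg (d : ℕ) : 0 ≤ E d :=
  tsum_nonneg fun f => Finset.prod_nonneg fun i _ => a_nonneg _

lemma E_le (d : ℕ) : E d ≤ 2 ^ d := by
  have h1 : E d ≤ (π ^ 2 / 6) ^ d := by
    rw [← (hasSum_pi d).tsum_eq]
    exact (summable_E d).tsum_le_tsum_of_inj Subtype.val Subtype.val_injective
      (fun g _ => Finset.prod_nonneg fun i _ => a_nonneg _)
      (fun b => le_rfl) (hasSum_pi d).summable
  refine h1.trans (pow_le_pow_left₀ (by positivity) pi_sq_div_six_le_two d)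

/-- Strictly monotone tuples correspond to finsets of fixed cardinality. -/
noncomputable def psi (d : ℕ) :
    {f : Fin d → ℕ+ // StrictMono f} ≃ {S : Finset ℕ+ // S.card = d} where
  toFun f := ⟨Finset.univ.image f.1, by
    rw [Finset.card_image_of_injective _ f.2.injective, Finset.card_univ, Fintype.card_fin]⟩
  invFun S := ⟨S.1.orderEmbOfFin S.2, (S.1.orderEmbOfFin S.2).strictMono⟩
  left_inv f := Subtype.ext
    (Finset.orderEmbOfFin_unique _
      (fun x => Finset.mem_image_of_mem _ (Finset.mem_univ x)) f.2).symm
  right_inv S := Subtype.ext (by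
    apply Finset.coe_injective
    rw [Finset.coe_image, Finset.coe_univ, Set.image_univ, Finset.range_orderEmbOfFin])

lemma hasSum_E' (d : ℕ) :
    HasSum (fun S : {S : Finset ℕ+ // S.card = d} => ∏ k ∈ S.1, a k) (E d) := by
  have h : HasSum (fun f : {f : Fin d → ℕ+ // StrictMono f} => ∏ i, a (f.1 i)) (E d) :=
    (summable_E d).hasSum
  rw [← Equiv.hasSum_iff (psi d)]
  have hfe : ((fun S : {S : Finset ℕ+ // S.card = d} => ∏ k ∈ S.1, a k) ∘ psi d) =
      fun f : {f : Fin d → ℕ+ // StrictMono f} => ∏ i, a (f.1 i) := by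
    funext f
    exact Finset.prod_image (fun x _ y _ hxy => f.2.injective hxy)
  rw [hfe]
  exact h

/-- The finset `{1, …, N}` inside `ℕ+`. -/
def I (N : ℕ) : Finset ℕ+ :=
  (Finset.range N).map ⟨fun j => ⟨j + 1, Nat.succ_pos j⟩, fun x y h => by
    have : x + 1 = y + 1 := congrArg PNat.val h
    omega⟩

lemma mem_I {k : ℕ+} {N : ℕ} : k ∈ I N ↔ (k : ℕ) ≤ N := by
  simp only [I, Finset.mem_map, Finset.mem_range, Function.Embedding.coeFn_mk]
  constructor
  · rintro ⟨j, hj, rfl⟩; exact hj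
  · intro h
    have hk : 1 ≤ k.val := k.2
    have h' : k.val ≤ N := h
    refine ⟨(k : ℕ) - 1, by omega, ?_⟩
    apply PNat.coe_injective
    show k.val - 1 + 1 = k.val
    omega

lemma I_mono : Monotone I := fun M N h =>
  Finset.map_subset_map.mpr (Finset.range_subset_range.mpr h)

lemma card_I (N : ℕ) : (I N).card = N := by
  rw [I, Finset.card_map, Finset.card_range]

/-- Finsets of card `d` contained in `{1,…,N}`, as a finset of the subtype. -/
noncomputable def T (d N : ℕ) : Finset {S : Finset ℕ+ // S.card = d} :=
  ((I N).powersetCard d).subtype _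

lemma T_mono (d : ℕ) : Monotone (T d) := fun M N h =>
  Finset.subtype_mono (Finset.powersetCard_mono (I_mono h))

lemma T_covers (d : ℕ) (x : {S : Finset ℕ+ // S.card = d}) :
    ∃ N, x ∈ T d N := by
  refine ⟨x.1.sup (fun k => (k : ℕ)), ?_⟩
  rw [T, Finset.mem_subtype, Finset.mem_powersetCard]
  exact ⟨fun k hk => mem_I.mpr (Finset.le_sup hk), x.2⟩

/-- The truncated elementary symmetric function. -/
noncomputable def eN (N d : ℕ) : ℝ := ∑ S ∈ (I N).powersetCard d, ∏ k ∈ S, a k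

lemma eN_eq (N d : ℕ) : eN N d = ∑ x ∈ T d N, ∏ k ∈ x.1, a k := by
  rw [T, eN]
  exact (Finset.sum_subtype_of_mem (fun S => ∏ k ∈ S, a k)
    (fun S hS => (Finset.mem_powersetCard.1 hS).2)).symm

lemma eN_nonneg (N d : ℕ) : 0 ≤ eN N d :=
  Finset.sum_nonneg fun S _ => Finset.prod_nonneg fun k _ => a_nonneg _

lemma eN_le (N d : ℕ) : eN N d ≤ E d := by
  rw [eN_eq, ← (hasSum_E' d).tsum_eq]
  exact Summable.sum_le_tsum _ (fun S _ => Finset.prod_nonneg fun k _ => a_nonneg _)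
    (hasSum_E' d).summable

lemma tendsto_eN (d : ℕ) : Tendsto (fun N => eN N d) atTop (𝓝 (E d)) := by
  have h1 : Tendsto (fun N => ∑ x ∈ T d N, ∏ k ∈ x.1, a k) atTop (𝓝 (E d)) :=
    (hasSum_E' d).comp (tendsto_atTop_finset_of_monotone (T_mono d) (T_covers d))
  exact h1.congr fun N => (eN_eq N d).symm

lemma prod_expand (x : ℝ) (N : ℕ) :
    ∏ k ∈ I N, (1 - x ^ 2 * a k) =
      ∑ n ∈ Finset.range (N + 1), (-(x ^ 2)) ^ n * eN N n := by
  have h1 : ∀ k ∈ I N, 1 - x ^ 2 * a k = -(x ^ 2) * a k + 1 := fun k _ => by ring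
  rw [Finset.prod_congr rfl h1, Finset.prod_add]
  simp only [Finset.prod_const_one, mul_one]
  rw [Finset.sum_powerset, card_I]
  refine Finset.sum_congr rfl fun n _ => ?_
  rw [eN, Finset.mul_sum]
  refine Finset.sum_congr rfl fun S hS => ?_
  rw [Finset.prod_mul_distrib, Finset.prod_const, (Finset.mem_powersetCard.1 hS).2]

lemma summable_geom_half : Summable (fun n : ℕ => (1 / 2 : ℝ) ^ n) :=
  summable_geometric_of_lt_one (by norm_num) (by norm_num)

lemma tendsto_prod_I (x : ℝ) (hx : x ≠ 0) :
    Tendsto (fun N => ∏ k ∈ I N, (1 - x ^ 2 * a k)) atTop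
      (𝓝 (Real.sin (π * x) / (π * x))) := by
  have hπx : π * x ≠ 0 := mul_ne_zero Real.pi_ne_zero hx
  have h := (Real.tendsto_euler_sin_prod x).div_const (π * x)
  refine h.congr fun N => ?_
  rw [mul_comm (π * x), mul_div_assoc, div_self hπx, mul_one]
  rw [I, Finset.prod_map]
  refine Finset.prod_congr rfl fun j _ => ?_
  simp only [a, Function.Embedding.coeFn_mk]
  show 1 - x ^ 2 / ((j : ℝ) + 1) ^ 2 = 1 - x ^ 2 * (1 / ((j + 1 : ℕ) : ℝ) ^ 2)
  push_cast
  ring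

lemma tsum_E_eq (x : ℝ) (h0 : 0 < x) (h1 : x < 1 / 2) :
    ∑' n, (-(x ^ 2)) ^ n * E n = Real.sin (π * x) / (π * x) := by
  set F : ℕ → ℕ → ℝ :=
    fun N n => if n ∈ Finset.range (N + 1) then (-(x ^ 2)) ^ n * eN N n else 0 with hF
  have habs : ∀ n : ℕ, |(-(x ^ 2)) ^ n| = (x ^ 2) ^ n := fun n => by
    rw [abs_pow, abs_neg, abs_of_nonneg (sq_nonneg x)]
  have hx4 : x ^ 2 ≤ 1 / 4 := by nlinarith
  have hquart : ∀ n : ℕ, (x ^ 2) ^ n * (2 : ℝ) ^ n ≤ (1 / 2 : ℝ) ^ n := fun n => by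
    calc (x ^ 2) ^ n * (2 : ℝ) ^ n ≤ (1 / 4 : ℝ) ^ n * 2 ^ n :=
          mul_le_mul_of_nonneg_right (pow_le_pow_left₀ (sq_nonneg x) hx4 n) (by positivity)
      _ = (1 / 2 : ℝ) ^ n := by rw [← mul_pow]; norm_num
  have hbound : ∀ N n, ‖F N n‖ ≤ (1 / 2 : ℝ) ^ n := by
    intro N n
    rw [Real.norm_eq_abs, hF]
    by_cases hn : n ∈ Finset.range (N + 1)
    · simp only [if_pos hn]
      rw [abs_mul, habs, abs_of_nonneg (eN_nonneg N n)]
      calc (x ^ 2) ^ n * eN N n ≤ (x ^ 2) ^ n * 2 ^ n :=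
            mul_le_mul_of_nonneg_left ((eN_le N n).trans (E_le n)) (by positivity)
        _ ≤ (1 / 2 : ℝ) ^ n := hquart n
    · simp only [if_neg hn, abs_zero]
      positivity
  have htend : ∀ n, Tendsto (fun N => F N n) atTop (𝓝 ((-(x ^ 2)) ^ n * E n)) := by
    intro n
    have ht : Tendsto (fun N => (-(x ^ 2)) ^ n * eN N n) atTop
        (𝓝 ((-(x ^ 2)) ^ n * E n)) := (tendsto_eN n).const_mul _
    refine Tendsto.congr' ?_ ht
    filter_upwards [eventually_ge_atTop n] with N hN
    rw [hF]
    simp only [if_pos (Finset.mem_range.mpr (Nat.lt_succ_of_le hN))]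
  have hmain : Tendsto (fun N => ∑' n, F N n) atTop
      (𝓝 (∑' n, (-(x ^ 2)) ^ n * E n)) :=
    tendsto_tsum_of_dominated_convergence summable_geom_half htend
      (Eventually.of_forall fun N n => hbound N n)
  have heq : ∀ N, ∑' n, F N n = ∏ k ∈ I N, (1 - x ^ 2 * a k) := by
    intro N
    rw [prod_expand]
    rw [tsum_eq_sum (s := Finset.range (N + 1)) (fun n hn => by rw [hF]; simp [hn])]
    exact Finset.sum_congr rfl fun n hn => by rw [hF]; simp [hn]
  exact tendsto_nhds_unique (hmain.congr heq) (tendsto_prod_I x h0.ne')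

lemma hasSum_sin_div (x : ℝ) (hx : x ≠ 0) :
    HasSum (fun n => (-(x ^ 2)) ^ n * (π ^ (2 * n) / (Nat.factorial (2 * n + 1) : ℝ)))
      (Real.sin (π * x) / (π * x)) := by
  have hπx : π * x ≠ 0 := mul_ne_zero Real.pi_ne_zero hx
  have h := (Real.hasSum_sin (π * x)).div_const (π * x)
  have hfe : (fun n : ℕ =>
      (-1 : ℝ) ^ n * (π * x) ^ (2 * n + 1) / (Nat.factorial (2 * n + 1) : ℝ) / (π * x)) =
      fun n => (-(x ^ 2)) ^ n * (π ^ (2 * n) / (Nat.factorial (2 * n + 1) : ℝ)) := by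
    funext n
    have hfac : (Nat.factorial (2 * n + 1) : ℝ) ≠ 0 :=
      Nat.cast_ne_zero.mpr (Nat.factorial_ne_zero _)
    have hneg : (-(x ^ 2)) ^ n = (-1 : ℝ) ^ n * x ^ (2 * n) := by
      rw [neg_pow, pow_mul]
    rw [hneg, pow_succ, mul_pow π x (2 * n)]
    field_simp
  rw [← hfe]
  exact h

lemma summable_aux (c : ℕ → ℝ) (M : ℝ) (hb : ∀ n, |c n| ≤ M * 16 ^ n)
    {y : ℝ} (hy : 0 < y) (hy32 : y < 1 / 32) :
    Summable (fun n => c n * y ^ n) := by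
  have hM : 0 ≤ M := by
    have := (abs_nonneg (c 0)).trans (hb 0)
    simpa using this
  refine Summable.of_norm_bounded (g := fun n => M * (16 * y) ^ n) ?_ ?_
  · exact ((summable_geometric_of_lt_one (by positivity) (by nlinarith)).mul_left M)
  · intro n
    rw [Real.norm_eq_abs]
    show |c n * y ^ n| ≤ M * (16 * y) ^ n
    rw [abs_mul, abs_pow, abs_of_nonneg hy.le, mul_pow]
    calc |c n| * y ^ n ≤ M * 16 ^ n * y ^ n :=
          mul_le_mul_of_nonneg_right (hb n) (by positivity)
      _ = M * (16 ^ n * y ^ n) := by ring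

lemma vanish0 (c : ℕ → ℝ) (M : ℝ) (hb : ∀ n, |c n| ≤ M * 16 ^ n)
    (h : ∀ y : ℝ, 0 < y → y < 1 / 32 → ∑' n, c n * y ^ n = 0) : c 0 = 0 := by
  have hM : 0 ≤ M := by
    have := (abs_nonneg (c 0)).trans (hb 0)
    simpa using this
  have key : ∀ y : ℝ, 0 < y → y < 1 / 32 → |c 0| ≤ 32 * M * y := by
    intro y hy hy32
    have hsum := summable_aux c M hb hy hy32
    have h0 := h y hy hy32
    rw [Summable.tsum_eq_zero_add hsum] at h0
    have hb2 : ∀ n : ℕ, |c (n + 1) * y ^ (n + 1)| ≤ M * 16 * y * (1 / 2 : ℝ) ^ n := by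
      intro n
      rw [abs_mul, abs_pow, abs_of_nonneg hy.le]
      calc |c (n + 1)| * y ^ (n + 1) ≤ M * 16 ^ (n + 1) * y ^ (n + 1) :=
            mul_le_mul_of_nonneg_right (hb _) (by positivity)
        _ = M * 16 * y * (16 * y) ^ n := by ring
        _ ≤ M * 16 * y * (1 / 2 : ℝ) ^ n :=
            mul_le_mul_of_nonneg_left
              (pow_le_pow_left₀ (by positivity) (by nlinarith) n) (by positivity)
    have hg : Summable (fun n : ℕ => M * 16 * y * (1 / 2 : ℝ) ^ n) :=
      summable_geom_half.mul_left _
    have hsn : Summable (fun n : ℕ => |c (n + 1) * y ^ (n + 1)|) :=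
      Summable.of_nonneg_of_le (fun n => abs_nonneg _) hb2 hg
    have hsn' : Summable (fun n : ℕ => ‖c (n + 1) * y ^ (n + 1)‖) := by
      simpa only [Real.norm_eq_abs] using hsn
    have htail : |∑' n : ℕ, c (n + 1) * y ^ (n + 1)| ≤ 32 * M * y := by
      calc |∑' n : ℕ, c (n + 1) * y ^ (n + 1)| ≤ ∑' n : ℕ, |c (n + 1) * y ^ (n + 1)| := by
            simpa only [Real.norm_eq_abs] using
              norm_tsum_le_tsum_norm (f := fun n : ℕ => c (n + 1) * y ^ (n + 1)) hsn'
        _ ≤ ∑' n : ℕ, M * 16 * y * (1 / 2 : ℝ) ^ n := Summable.tsum_le_tsum hb2 hsn hg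
        _ = M * 16 * y * ∑' n : ℕ, (1 / 2 : ℝ) ^ n := tsum_mul_left
        _ = 32 * M * y := by
            rw [tsum_geometric_of_lt_one (by norm_num) (by norm_num)]
            norm_num
            ring
    simp only [pow_zero, mul_one] at h0
    have hc0 : c 0 = -∑' n : ℕ, c (n + 1) * y ^ (n + 1) := by linarith
    rw [hc0, abs_neg]
    exact htail
  by_contra hc
  have hpos : 0 < |c 0| := abs_pos.mpr hc
  set y := min (|c 0| / (64 * M + 1)) (1 / 64) with hy
  have hy0 : 0 < y := lt_min (by positivity) (by norm_num)
  have hy32 : y < 1 / 32 := lt_of_le_of_lt (min_le_right _ _) (by norm_num)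
  have h1 := key y hy0 hy32
  have h2 : 32 * M * y ≤ 32 * M * (|c 0| / (64 * M + 1)) := by
    apply mul_le_mul_of_nonneg_left (min_le_left _ _) (by positivity)
  have h3 : 32 * M * (|c 0| / (64 * M + 1)) < |c 0| := by
    have hd : (0 : ℝ) < 64 * M + 1 := by positivity
    rw [← mul_div_assoc, div_lt_iff₀ hd]
    nlinarith
  linarith

lemma vanish (c : ℕ → ℝ) (M : ℝ) (hb : ∀ n, |c n| ≤ M * 16 ^ n)
    (h : ∀ y : ℝ, 0 < y → y < 1 / 32 → ∑' n, c n * y ^ n = 0) : ∀ n, c n = 0 := by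
  intro n
  induction n generalizing c M with
  | zero => exact vanish0 c M hb h
  | succ n ih =>
    refine ih (fun m => c (m + 1)) (16 * M) (fun m => ?_) ?_
    · calc |c (m + 1)| ≤ M * 16 ^ (m + 1) := hb _
        _ = 16 * M * 16 ^ m := by ring
    · intro y hy hy32
      have hsum := summable_aux c M hb hy hy32
      have h0 := h y hy hy32
      rw [Summable.tsum_eq_zero_add hsum] at h0
      have hc0 : c 0 = 0 := vanish0 c M hb h
      rw [hc0] at h0
      simp only [zero_mul, zero_add, pow_zero, mul_one] at h0
      have hshift : ∑' m : ℕ, c (m + 1) * y ^ (m + 1) =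
          y * ∑' m : ℕ, c (m + 1) * y ^ m := by
        rw [← tsum_mul_left]
        exact tsum_congr fun m => by ring
      rw [hshift] at h0
      rcases mul_eq_zero.mp h0 with h' | h'
      · exact absurd h' hy.ne'
      · exact h'

lemma E_eq (d : ℕ) : E d = π ^ (2 * d) / (Nat.factorial (2 * d + 1) : ℝ) := by
  set P : ℕ → ℝ := fun n => π ^ (2 * n) / (Nat.factorial (2 * n + 1) : ℝ) with hP
  set c : ℕ → ℝ := fun n => (-1 : ℝ) ^ n * (E n - P n) with hc
  have hPnn : ∀ n, 0 ≤ P n := fun n => by rw [hP]; positivity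
  have hPle : ∀ n, P n ≤ 16 ^ n := by
    intro n
    rw [hP]
    have hfac : (1 : ℝ) ≤ (Nat.factorial (2 * n + 1) : ℝ) := by
      exact_mod_cast Nat.one_le_iff_ne_zero.mpr (Nat.factorial_ne_zero _)
    calc π ^ (2 * n) / (Nat.factorial (2 * n + 1) : ℝ) ≤ π ^ (2 * n) :=
          div_le_self (by positivity) hfac
      _ = (π ^ 2) ^ n := by rw [pow_mul]
      _ ≤ 16 ^ n := pow_le_pow_left₀ (sq_nonneg π) (by nlinarith [pi_le_four, pi_pos]) n
  have hb : ∀ n, |c n| ≤ 2 * 16 ^ n := by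
    intro n
    rw [hc]
    simp only
    rw [abs_mul, abs_pow, abs_neg, abs_one, one_pow, one_mul]
    calc |E n - P n| ≤ |E n| + |P n| := abs_sub _ _
      _ ≤ 16 ^ n + 16 ^ n := by
          rw [abs_of_nonneg (E_nonneg n), abs_of_nonneg (hPnn n)]
          gcongr
          · calc E n ≤ 2 ^ n := E_le n
              _ ≤ 16 ^ n := pow_le_pow_left₀ (by norm_num) (by norm_num) n
          · exact hPle n
      _ = 2 * 16 ^ n := by ring
  have hzero : ∀ y : ℝ, 0 < y → y < 1 / 32 → ∑' n, c n * y ^ n = 0 := by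
    intro y hy hy32
    set x := Real.sqrt y with hx
    have hx0 : 0 < x := Real.sqrt_pos.mpr hy
    have hx2 : x ^ 2 = y := Real.sq_sqrt hy.le
    have hxlt : x < 1 / 2 := by nlinarith
    have hkey := tsum_E_eq x hx0 hxlt
    have hsin := hasSum_sin_div x hx0.ne'
    have hs1 : Summable (fun n => (-(x ^ 2)) ^ n * E n) := by
      refine Summable.of_norm_bounded (g := fun n => (1 / 2 : ℝ) ^ n) summable_geom_half ?_
      intro n
      rw [Real.norm_eq_abs, abs_mul, abs_pow, abs_neg, abs_of_nonneg (sq_nonneg x),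
        abs_of_nonneg (E_nonneg n)]
      calc (x ^ 2) ^ n * E n ≤ (1 / 4 : ℝ) ^ n * 2 ^ n :=
            mul_le_mul (pow_le_pow_left₀ (sq_nonneg x) (by nlinarith) n) (E_le n)
              (E_nonneg n) (by positivity)
        _ = (1 / 2 : ℝ) ^ n := by rw [← mul_pow]; norm_num
    have hEq : ∑' n, c n * y ^ n =
        ∑' n, ((-(x ^ 2)) ^ n * E n - (-(x ^ 2)) ^ n * P n) := by
      refine tsum_congr fun n => ?_
      rw [hc]
      simp only
      rw [← hx2, neg_pow (x ^ 2) n]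
      ring
    rw [hEq, Summable.tsum_sub hs1 hsin.summable, hkey, hsin.tsum_eq, sub_self]
  have hvan := vanish c 2 hb hzero d
  rw [hc] at hvan
  simp only at hvan
  rcases mul_eq_zero.mp hvan with h' | h'
  · exact absurd h' (pow_ne_zero d (by norm_num))
  · simp only [hP] at h'
    linarith

end Stmt4

theorem stmt_4 (d : ℕ) (hd : 0 < d) :
    MZV (List.replicate d 2) = Real.pi ^ (2 * d) / (Nat.factorial (2 * d + 1) : ℝ) := by
  have hMZV : MZV (List.replicate d 2) = Stmt4.E (List.replicate d 2).length := by
    unfold MZV Stmt4.E Stmt4.a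
    refine tsum_congr fun f => Finset.prod_congr rfl fun i _ => ?_
    rw [List.get_eq_getElem, List.getElem_replicate]
  rw [hMZV]
  rw [show (List.replicate d 2).length = d from List.length_replicate]
  exact Stmt4.E_eq d
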